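/- Let T be a positive compact operator on a Hilbert space such that sup_{λ>e} σ_λ(T)/λ^{(p-1)/p} < ∞ for some p > 1 (i.e., T ∈ L^{p+}). Then T^p belongs to L^{1+}, i.e., sup_{λ>e} σ_λ(T^p)/ln λ < ∞. -/

import Mathlib

set_option linter.unusedSectionVars false

open scoped ENNReal

variable {H : Type*} [NormedAddCommGroup H] [InnerProductSpace ℂ H] [CompleteSpace H]

/-- The `n`-th singular value (approximation number) of an operator `T`. -/
noncomputable def singVal (T : H →L[ℂ] H) (n : ℕ) : ℝ :=
  sInf {c : ℝ | ∃ F : H →L[ℂ] H,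
    FiniteDimensional ℂ (LinearMap.range (F : H →ₗ[ℂ] H)) ∧
    Module.finrank ℂ (LinearMap.range (F : H →ₗ[ℂ] H)) ≤ n ∧ c = ‖T - F‖}

/-- The trace norm `‖S‖₁ = Σₙ μₙ(S)` as an extended nonnegative real. -/
noncomputable def traceNorm (S : H →L[ℂ] H) : ℝ≥0∞ :=
  ∑' n : ℕ, ENNReal.ofReal (singVal S n)

/-- The interpolated partial sum of singular values:
`σ_λ(T) = inf { ‖R‖₁ + λ‖S‖ : R + S = T, R, S compact }`. -/
noncomputable def sigmaL (T : H →L[ℂ] H) (l : ℝ) : ℝ≥0∞ :=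
  ⨅ (R : H →L[ℂ] H) (S : H →L[ℂ] H) (_ : IsCompactOperator R)
    (_ : IsCompactOperator S) (_ : R + S = T),
    traceNorm R + ENNReal.ofReal (l * ‖S‖)

namespace StmtAux

/-- The approximation set defining `singVal`. -/
def apxSet (T : H →L[ℂ] H) (n : ℕ) : Set ℝ :=
  {c : ℝ | ∃ F : H →L[ℂ] H,
    FiniteDimensional ℂ (LinearMap.range (F : H →ₗ[ℂ] H)) ∧
    Module.finrank ℂ (LinearMap.range (F : H →ₗ[ℂ] H)) ≤ n ∧ c = ‖T - F‖}

lemma singVal_def (T : H →L[ℂ] H) (n : ℕ) : singVal T n = sInf (apxSet T n) := rfl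

lemma norm_mem_apxSet (T : H →L[ℂ] H) (n : ℕ) : ‖T‖ ∈ apxSet T n := by
  refine ⟨0, ?_, ?_, by simp⟩
  · rw [ContinuousLinearMap.coe_zero, LinearMap.range_zero]
    infer_instance
  · rw [ContinuousLinearMap.coe_zero, LinearMap.range_zero]
    simp

lemma apxSet_nonempty (T : H →L[ℂ] H) (n : ℕ) : (apxSet T n).Nonempty :=
  ⟨‖T‖, norm_mem_apxSet T n⟩

lemma apxSet_nonneg (T : H →L[ℂ] H) (n : ℕ) : ∀ c ∈ apxSet T n, 0 ≤ c := by
  rintro c ⟨F, -, -, rfl⟩; exact norm_nonneg _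

lemma apxSet_bddBelow (T : H →L[ℂ] H) (n : ℕ) : BddBelow (apxSet T n) :=
  ⟨0, apxSet_nonneg T n⟩

lemma singVal_nonneg (T : H →L[ℂ] H) (n : ℕ) : 0 ≤ singVal T n :=
  Real.sInf_nonneg (apxSet_nonneg T n)

lemma singVal_le_norm (T : H →L[ℂ] H) (n : ℕ) : singVal T n ≤ ‖T‖ :=
  csInf_le (apxSet_bddBelow T n) (norm_mem_apxSet T n)

lemma apxSet_mono (T : H →L[ℂ] H) {m n : ℕ} (h : m ≤ n) : apxSet T m ⊆ apxSet T n := by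
  rintro c ⟨F, h1, h2, rfl⟩; exact ⟨F, h1, h2.trans h, rfl⟩

lemma singVal_antitone (T : H →L[ℂ] H) {m n : ℕ} (h : m ≤ n) : singVal T n ≤ singVal T m :=
  csInf_le_csInf (apxSet_bddBelow T n) (apxSet_nonempty T m) (apxSet_mono T h)

lemma singVal_eq_zero_of_finrank_le (T : H →L[ℂ] H) {n : ℕ}
    (h1 : FiniteDimensional ℂ (LinearMap.range (T : H →ₗ[ℂ] H)))
    (h2 : Module.finrank ℂ (LinearMap.range (T : H →ₗ[ℂ] H)) ≤ n) :
    singVal T n = 0 :=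
  le_antisymm (csInf_le (apxSet_bddBelow T n) ⟨T, h1, h2, by simp⟩) (singVal_nonneg T n)

lemma finrank_range_add_le (F G : H →L[ℂ] H)
    (hF : FiniteDimensional ℂ (LinearMap.range (F : H →ₗ[ℂ] H)))
    (hG : FiniteDimensional ℂ (LinearMap.range (G : H →ₗ[ℂ] H))) :
    FiniteDimensional ℂ (LinearMap.range ((F + G : H →L[ℂ] H) : H →ₗ[ℂ] H)) ∧
      Module.finrank ℂ (LinearMap.range ((F + G : H →L[ℂ] H) : H →ₗ[ℂ] H)) ≤
        Module.finrank ℂ (LinearMap.range (F : H →ₗ[ℂ] H)) +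
        Module.finrank ℂ (LinearMap.range (G : H →ₗ[ℂ] H)) := by
  haveI := hF; haveI := hG
  have hle : LinearMap.range ((F + G : H →L[ℂ] H) : H →ₗ[ℂ] H) ≤
      LinearMap.range (F : H →ₗ[ℂ] H) ⊔ LinearMap.range (G : H →ₗ[ℂ] H) := by
    rintro x ⟨y, rfl⟩
    exact Submodule.mem_sup.mpr ⟨F y, ⟨y, rfl⟩, G y, ⟨y, rfl⟩, by simp⟩
  haveI : FiniteDimensional ℂ
      ↥(LinearMap.range (F : H →ₗ[ℂ] H) ⊔ LinearMap.range (G : H →ₗ[ℂ] H)) := by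
    infer_instance
  refine ⟨Submodule.finiteDimensional_of_le hle, ?_⟩
  exact (Submodule.finrank_mono hle).trans
    (Submodule.finrank_add_le_finrank_add_finrank _ _)

lemma singVal_add_le (A B : H →L[ℂ] H) (m n : ℕ) :
    singVal (A + B) (m + n) ≤ singVal A m + singVal B n := by
  have key : ∀ a ∈ apxSet A m, ∀ b ∈ apxSet B n, singVal (A + B) (m + n) ≤ a + b := by
    rintro _ ⟨F, hF1, hF2, rfl⟩ _ ⟨G, hG1, hG2, rfl⟩
    obtain ⟨h1, h2⟩ := finrank_range_add_le F G hF1 hG1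
    have hmem : ‖(A + B) - (F + G)‖ ∈ apxSet (A + B) (m + n) :=
      ⟨F + G, h1, h2.trans (add_le_add hF2 hG2), rfl⟩
    refine (csInf_le (apxSet_bddBelow _ _) hmem).trans ?_
    have : (A + B) - (F + G) = (A - F) + (B - G) := by abel
    rw [this]
    exact norm_add_le _ _
  have h1 : ∀ a ∈ apxSet A m, singVal (A + B) (m + n) - a ≤ singVal B n := by
    intro a ha
    refine le_csInf (apxSet_nonempty B n) fun b hb => ?_
    linarith [key a ha b hb]
  have h2 : singVal (A + B) (m + n) - singVal B n ≤ singVal A m := by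
    refine le_csInf (apxSet_nonempty A m) fun a ha => ?_
    linarith [h1 a ha]
  linarith

lemma traceNorm_ge_mul (R : H →L[ℂ] H) (m : ℕ) :
    ENNReal.ofReal (((m : ℝ) + 1) * singVal R m) ≤ traceNorm R := by
  have h1 : ENNReal.ofReal (((m : ℝ) + 1) * singVal R m) =
      ∑ _k ∈ Finset.range (m + 1), ENNReal.ofReal (singVal R m) := by
    rw [Finset.sum_const, Finset.card_range, nsmul_eq_mul,
      ENNReal.ofReal_mul (by positivity)]
    congr 1
    rw [ENNReal.ofReal_add (by positivity) zero_le_one]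
    simp
  rw [h1]
  refine le_trans (Finset.sum_le_sum fun k hk => ?_) (ENNReal.sum_le_tsum _)
  exact ENNReal.ofReal_le_ofReal
    (singVal_antitone R (Nat.le_of_lt_succ (Finset.mem_range.mp hk)))

lemma exists_decomp (T : H →L[ℂ] H) (l : ℝ) {D : ℝ≥0∞} (hD : sigmaL T l < D) :
    ∃ R S : H →L[ℂ] H, R + S = T ∧ traceNorm R ≤ D ∧ ENNReal.ofReal (l * ‖S‖) ≤ D := by
  rw [sigmaL] at hD
  simp only [iInf_lt_iff] at hD
  obtain ⟨R, S, _, _, hRS, hval⟩ := hD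
  exact ⟨R, S, hRS, (le_self_add.trans hval.le), (le_add_self.trans hval.le)⟩

lemma isCompactOperator_of_finiteDimensional (F : H →L[ℂ] H)
    (h : FiniteDimensional ℂ (LinearMap.range (F : H →ₗ[ℂ] H))) :
    IsCompactOperator F := by
  haveI := h
  refine (isCompactOperator_iff_image_closedBall_subset_compact
      (F : H →ₗ[ℂ] H) one_pos).mpr
    ⟨Subtype.val '' (Metric.closedBall (0 : LinearMap.range (F : H →ₗ[ℂ] H)) ‖F‖),
    (isCompact_closedBall _ _).image continuous_subtype_val, ?_⟩
  rintro _ ⟨x, hx, rfl⟩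
  refine ⟨⟨F x, ⟨x, rfl⟩⟩, ?_, rfl⟩
  rw [Metric.mem_closedBall, dist_zero_right]
  calc ‖(⟨F x, _⟩ : LinearMap.range (F : H →ₗ[ℂ] H))‖ = ‖F x‖ := rfl
    _ ≤ ‖F‖ * ‖x‖ := F.le_opNorm x
    _ ≤ ‖F‖ * 1 := by
        have := Metric.mem_closedBall.mp hx
        rw [dist_zero_right] at this
        exact mul_le_mul_of_nonneg_left this (norm_nonneg _)
    _ = ‖F‖ := mul_one _

end StmtAux
namespace StmtAux

open RCLike ContinuousLinearMap

lemma cont_rpow {q : ℝ} (hq : 0 ≤ q) : Continuous fun x : ℝ => x ^ q :=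
  continuous_iff_continuousAt.mpr fun x => Real.continuousAt_rpow_const x q (Or.inr hq)

lemma cfc_inner_key (T : H →L[ℂ] H) (hsa : IsSelfAdjoint T)
    {f : ℝ → ℝ} (hf : ContinuousOn f (spectrum ℝ T)) {t : ℝ}
    (hf0 : ∀ x ∈ spectrum ℝ T, x < t → f x = 0) (w : H) :
    t * ‖cfc f T w‖ ^ 2 ≤ re (inner (𝕜 := ℂ) (T (cfc f T w)) (cfc f T w)) := by
  set B := cfc f T with hBdef
  have hsaB : IsSelfAdjoint B := cfc_predicate f T
  have hid : ContinuousOn (fun x : ℝ => x) (spectrum ℝ T) := continuousOn_id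
  have hmulTB : cfc (fun x : ℝ => x * f x) T = T * B := by
    rw [cfc_mul _ _ T hid hf, cfc_id' ℝ T hsa]
  have hM : cfc (fun x : ℝ => f x * (x * f x)) T = B * (T * B) := by
    rw [cfc_mul f (fun x : ℝ => x * f x) T hf (hid.mul hf), hmulTB]
  have hB2 : cfc (fun x : ℝ => f x * f x) T = B * B := cfc_mul _ _ T hf hf
  set g : ℝ → ℝ := fun x => Real.sqrt ((x - t) * (f x * f x)) with hgdef
  have hgc : ContinuousOn g (spectrum ℝ T) :=
    Real.continuous_sqrt.comp_continuousOn
      ((continuousOn_id.sub continuousOn_const).mul (hf.mul hf))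
  set E := cfc g T with hEdef
  have hsaE : IsSelfAdjoint E := cfc_predicate g T
  have hE2 : cfc (fun x : ℝ => g x * g x) T = E * E := cfc_mul _ _ T hgc hgc
  have hcfc_sub : B * (T * B) - t • (B * B) = E * E := by
    rw [← hM, ← hB2, ← cfc_smul (R := ℝ) t (fun x : ℝ => f x * f x) T (hf.mul hf),
      ← cfc_sub (fun x : ℝ => f x * (x * f x)) (fun x : ℝ => t • (f x * f x)) T (hf.mul (hid.mul hf))
        ((continuousOn_const (c := t)).smul (hf.mul hf)), ← hE2]
    apply cfc_congr
    intro x hx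
    have hnn : 0 ≤ (x - t) * (f x * f x) := by
      rcases lt_or_ge x t with h | h
      · rw [hf0 x hx h]; simp
      · exact mul_nonneg (sub_nonneg.2 h) (mul_self_nonneg _)
    show f x * (x * f x) - t • (f x * f x) = g x * g x
    rw [hgdef]
    simp only [smul_eq_mul]
    rw [Real.mul_self_sqrt hnn]
    ring
  -- inner product identities
  have h1 : (inner (𝕜 := ℂ) (T (B w)) (B w)) = inner (𝕜 := ℂ) ((B * (T * B)) w) w := by
    have := ContinuousLinearMap.adjoint_inner_left B (w) (T (B w))
    rw [hsaB.adjoint_eq] at this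
    rw [← this]
    simp [ContinuousLinearMap.mul_apply]
  have h2 : (inner (𝕜 := ℂ) (B w) (B w)) = inner (𝕜 := ℂ) ((B * B) w) w := by
    have := ContinuousLinearMap.adjoint_inner_left B (w) (B w)
    rw [hsaB.adjoint_eq] at this
    rw [← this]
    simp [ContinuousLinearMap.mul_apply]
  have h3 : (inner (𝕜 := ℂ) (E w) (E w)) = inner (𝕜 := ℂ) ((E * E) w) w := by
    have := ContinuousLinearMap.adjoint_inner_left E (w) (E w)
    rw [hsaE.adjoint_eq] at this
    rw [← this]
    simp [ContinuousLinearMap.mul_apply]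
  have hmain : re (inner (𝕜 := ℂ) (T (B w)) (B w)) - t * ‖B w‖ ^ 2 = ‖E w‖ ^ 2 := by
    have hs : ((B * (T * B) - t • (B * B)) w) = (B * (T * B)) w - t • ((B * B) w) := by
      simp
    calc re (inner (𝕜 := ℂ) (T (B w)) (B w)) - t * ‖B w‖ ^ 2
        = re (inner (𝕜 := ℂ) ((B * (T * B)) w) w) -
            t * re (inner (𝕜 := ℂ) ((B * B) w) w) := by
          rw [h1, ← inner_self_eq_norm_sq (𝕜 := ℂ) (B w), h2]
      _ = re (inner (𝕜 := ℂ) ((B * (T * B)) w - t • ((B * B) w)) w) := by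
          rw [inner_sub_left, map_sub, RCLike.real_smul_eq_coe_smul (K := ℂ) t,
            inner_smul_left, RCLike.conj_ofReal, re_ofReal_mul]
      _ = re (inner (𝕜 := ℂ) ((E * E) w) w) := by rw [← hs, hcfc_sub]
      _ = ‖E w‖ ^ 2 := by rw [← h3, inner_self_eq_norm_sq (𝕜 := ℂ)]
  have := sq_nonneg ‖E w‖
  rw [hBdef] at hmain ⊢
  linarith

end StmtAux
namespace StmtAux

open RCLike ContinuousLinearMap

lemma finrank_cfc_le (T : H →L[ℂ] H) (hsa : IsSelfAdjoint T)
    {f : ℝ → ℝ} (hf : ContinuousOn f (spectrum ℝ T)) {t : ℝ} (ht : 0 < t)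
    (hf0 : ∀ x ∈ spectrum ℝ T, x < t → f x = 0) {n : ℕ} (hn : singVal T n < t) :
    FiniteDimensional ℂ (LinearMap.range ((cfc f T : H →L[ℂ] H) : H →ₗ[ℂ] H)) ∧
      Module.finrank ℂ (LinearMap.range ((cfc f T : H →L[ℂ] H) : H →ₗ[ℂ] H)) ≤ n := by
  set V := LinearMap.range ((cfc f T : H →L[ℂ] H) : H →ₗ[ℂ] H) with hV
  have hrank : Module.rank ℂ V ≤ n := by
    by_contra hcon
    have hlt : ((n : Cardinal) : Cardinal) < Module.rank ℂ V := not_le.mp hcon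
    have hsucc : ((n + 1 : ℕ) : Cardinal) ≤ Module.rank ℂ V := by
      push_cast
      exact (Cardinal.add_one_le_succ _).trans (Order.succ_le_of_lt hlt)
    obtain ⟨v, hv⟩ := exists_linearIndependent_of_le_rank hsucc
    have hv' : LinearIndependent ℂ (fun i : Fin (n + 1) => ((v i : V) : H)) :=
      hv.map' (Submodule.subtype V) (Submodule.ker_subtype V)
    set v' : Fin (n + 1) → H := fun i => ((v i : V) : H) with hv'def
    set W : Submodule ℂ H := Submodule.span ℂ (Set.range v') with hW
    haveI : FiniteDimensional ℂ W :=
      FiniteDimensional.span_of_finite ℂ (Set.finite_range v')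
    have hWrank : Module.finrank ℂ W = n + 1 := by
      rw [hW, finrank_span_eq_card hv', Fintype.card_fin]
    have hWle : W ≤ V := Submodule.span_le.mpr (by
      rintro _ ⟨i, rfl⟩; exact (v i).2)
    obtain ⟨c, hc_mem, hc_lt⟩ := exists_lt_of_csInf_lt (apxSet_nonempty T n) hn
    obtain ⟨F, hF1, hF2, rfl⟩ := hc_mem
    haveI := hF1
    -- find a nonzero kernel vector of F restricted to W
    set φ : W →ₗ[ℂ] H := (F : H →ₗ[ℂ] H).comp W.subtype with hφ
    have hφrange : LinearMap.range φ ≤ LinearMap.range (F : H →ₗ[ℂ] H) := by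
      rintro _ ⟨y, rfl⟩; exact ⟨y, rfl⟩
    have hφr : Module.finrank ℂ (LinearMap.range φ) ≤ n :=
      (Submodule.finrank_mono hφrange).trans hF2
    have hrn := LinearMap.finrank_range_add_finrank_ker φ
    rw [hWrank] at hrn
    have hkerpos : 0 < Module.finrank ℂ (LinearMap.ker φ) := by omega
    haveI : Nontrivial (LinearMap.ker φ) := Module.finrank_pos_iff.mp hkerpos
    obtain ⟨z, hz0⟩ := exists_ne (0 : LinearMap.ker φ)
    set y : H := ((z : W) : H) with hy
    have hy_ne : y ≠ 0 := by
      simp only [hy]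
      intro hcontr
      apply hz0
      have : (z : W) = 0 := Subtype.ext hcontr
      exact Subtype.ext this
    have hymem : y ∈ V := hWle (z : W).2
    obtain ⟨u, hu⟩ := hymem
    have hkey := cfc_inner_key T hsa hf hf0 u
    rw [show (cfc f T : H →L[ℂ] H) u = y from hu] at hkey
    have hFy : F y = 0 := LinearMap.mem_ker.mp z.2
    have h5 : re (inner (𝕜 := ℂ) (T y) y) ≤ ‖T - F‖ * ‖y‖ * ‖y‖ := by
      have he : T y = (T - F) y + F y := by simp
      rw [he, hFy, add_zero]
      calc re (inner (𝕜 := ℂ) ((T - F) y) y) ≤ ‖(T - F) y‖ * ‖y‖ := re_inner_le_norm _ _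
        _ ≤ ‖T - F‖ * ‖y‖ * ‖y‖ :=
            mul_le_mul_of_nonneg_right ((T - F).le_opNorm y) (norm_nonneg _)
    have hypos : 0 < ‖y‖ := norm_pos_iff.mpr hy_ne
    have hlt2 : ‖T - F‖ * ‖y‖ * ‖y‖ < t * ‖y‖ ^ 2 := by
      have h6 : (0:ℝ) < ‖y‖ * ‖y‖ := mul_pos hypos hypos
      calc ‖T - F‖ * ‖y‖ * ‖y‖ = ‖T - F‖ * (‖y‖ * ‖y‖) := by ring
        _ < t * (‖y‖ * ‖y‖) := mul_lt_mul_of_pos_right hc_lt h6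
        _ = t * ‖y‖ ^ 2 := by ring
    linarith [hkey, h5]
  haveI hfin : FiniteDimensional ℂ V :=
    Module.rank_lt_aleph0_iff.mp (hrank.trans_lt (Cardinal.nat_lt_aleph0 n))
  refine ⟨hfin, ?_⟩
  have := Module.finrank_le_of_rank_le hrank
  exact this

end StmtAux
namespace StmtAux

lemma stepA (T : H →L[ℂ] H) {C : ℝ≥0∞} (hC : C ≠ ⊤) {p : ℝ} (hp : 1 < p)
    (hCb : ∀ l : ℝ, Real.exp 1 < l → sigmaL T l ≤ C * ENNReal.ofReal (l ^ ((p - 1) / p)))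
    (m : ℕ) :
    singVal T m ≤ (2 * C.toReal + 2 + 2 * ‖T‖) * ((m : ℝ) + 1) ^ (-(1 / p)) := by
  have hp0 : (0:ℝ) < p := lt_trans one_pos hp
  have hinvp : 1 / p ≤ 1 := by rw [div_le_one hp0]; exact hp.le
  have hm0 : (0:ℝ) ≤ (m:ℝ) := Nat.cast_nonneg m
  have hm1 : (1:ℝ) ≤ (m:ℝ) + 1 := by linarith
  have hCt : (0:ℝ) ≤ C.toReal := ENNReal.toReal_nonneg
  rcases le_or_gt m 1 with hsmall | hbig
  · have h1 : ((m:ℝ) + 1) ≤ 2 := by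
      have := (Nat.cast_le (α := ℝ)).mpr hsmall
      push_cast at this
      linarith
    have h2 : ((m:ℝ) + 1) ^ (1/p) ≤ 2 := by
      calc ((m:ℝ)+1) ^ (1/p) ≤ ((m:ℝ)+1) ^ (1:ℝ) :=
            Real.rpow_le_rpow_of_exponent_le hm1 hinvp
        _ = (m:ℝ) + 1 := Real.rpow_one _
        _ ≤ 2 := h1
    have hpow_pos : (0:ℝ) < ((m:ℝ)+1) ^ (1/p) := Real.rpow_pos_of_pos (by linarith) _
    have h3 : (1:ℝ)/2 ≤ ((m:ℝ)+1) ^ (-(1/p)) := by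
      rw [Real.rpow_neg (by linarith)]
      rw [le_inv_comm₀ (by norm_num) hpow_pos]
      simpa [one_div] using h2
    calc singVal T m ≤ ‖T‖ := singVal_le_norm T m
      _ = 2 * ‖T‖ * (1/2) := by ring
      _ ≤ 2 * ‖T‖ * (((m:ℝ)+1) ^ (-(1/p))) :=
          mul_le_mul_of_nonneg_left h3 (by positivity)
      _ ≤ (2 * C.toReal + 2 + 2 * ‖T‖) * ((m:ℝ)+1) ^ (-(1/p)) := by
          have := Real.rpow_nonneg (x := (m:ℝ)+1) (by linarith) (-(1/p))
          nlinarith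
  · set l : ℝ := (m:ℝ) + 1 with hl
    have h3l : (3:ℝ) ≤ l := by
      have : (2:ℝ) ≤ (m:ℝ) := by exact_mod_cast hbig
      simp only [hl]; linarith
    have hl_e : Real.exp 1 < l := by
      have := Real.exp_one_lt_d9
      linarith
    have hl1 : (1:ℝ) < l := by linarith
    have hlpos : (0:ℝ) < l := by linarith
    have hmulne : C * ENNReal.ofReal (l ^ ((p - 1) / p)) ≠ ⊤ :=
      ENNReal.mul_ne_top hC ENNReal.ofReal_ne_top
    set D : ℝ≥0∞ := C * ENNReal.ofReal (l ^ ((p - 1) / p)) + 1 with hD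
    have hD_ne : D ≠ ⊤ := by
      rw [hD]; exact ENNReal.add_ne_top.mpr ⟨hmulne, ENNReal.one_ne_top⟩
    have hDlt : sigmaL T l < D := by
      refine lt_of_le_of_lt (hCb l hl_e) ?_
      rw [hD]
      exact ENNReal.lt_add_right hmulne one_ne_zero
    obtain ⟨R, S, hRS, hR, hS⟩ := exists_decomp T l hDlt
    set d := D.toReal with hd
    have hd0 : (0:ℝ) ≤ d := ENNReal.toReal_nonneg
    have hd_bound : d ≤ C.toReal * l ^ ((p-1)/p) + 1 := by
      rw [hd, hD, ENNReal.toReal_add hmulne ENNReal.one_ne_top, ENNReal.toReal_mul,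
        ENNReal.toReal_ofReal (Real.rpow_nonneg hlpos.le _), ENNReal.toReal_one]
    have hRm : l * singVal R m ≤ d := by
      have h := (traceNorm_ge_mul R m).trans hR
      exact (ENNReal.ofReal_le_iff_le_toReal hD_ne).mp h
    have hSm : l * ‖S‖ ≤ d := (ENNReal.ofReal_le_iff_le_toReal hD_ne).mp hS
    have hsub : singVal T m ≤ singVal R m + singVal S 0 := by
      have h := singVal_add_le R S m 0
      rw [hRS] at h
      simpa using h
    have hS0 : singVal S 0 ≤ ‖S‖ := singVal_le_norm S 0
    have h4 : singVal T m ≤ 2 * d / l := by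
      have e1 : singVal R m ≤ d / l := by
        rw [le_div_iff₀ hlpos]; linarith [hRm]
      have e2 : ‖S‖ ≤ d / l := by
        rw [le_div_iff₀ hlpos]; linarith [hSm]
      calc singVal T m ≤ singVal R m + singVal S 0 := hsub
        _ ≤ d / l + d / l := add_le_add e1 (hS0.trans e2)
        _ = 2 * d / l := by ring
    have e1 : l ^ ((p-1)/p) / l = l ^ (-(1/p)) := by
      rw [show -(1/p) = (p-1)/p - 1 by field_simp; ring, Real.rpow_sub hlpos, Real.rpow_one]
    have e2 : 1 / l ≤ l ^ (-(1/p)) := by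
      have h := Real.rpow_le_rpow_of_exponent_le hl1.le
        (x := l) (y := (-1 : ℝ)) (z := -(1/p)) (by linarith [div_pos one_pos hp0])
      rw [Real.rpow_neg_one] at h
      rw [one_div]
      exact h
    have key : 2 * d / l ≤ (2 * C.toReal + 2) * l ^ (-(1/p)) := by
      calc 2 * d / l ≤ 2 * (C.toReal * l ^ ((p-1)/p) + 1) / l := by
            refine (div_le_div_iff_of_pos_right hlpos).mpr ?_
            linarith
        _ = 2 * C.toReal * (l ^ ((p-1)/p) / l) + 2 * (1/l) := by ring
        _ ≤ 2 * C.toReal * l ^ (-(1/p)) + 2 * l ^ (-(1/p)) := by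
            rw [e1]
            have := mul_le_mul_of_nonneg_left e2 (by norm_num : (0:ℝ) ≤ 2)
            linarith
        _ = (2 * C.toReal + 2) * l ^ (-(1/p)) := by ring
    calc singVal T m ≤ 2 * d / l := h4
      _ ≤ (2 * C.toReal + 2) * l ^ (-(1/p)) := key
      _ ≤ (2 * C.toReal + 2 + 2 * ‖T‖) * l ^ (-(1/p)) :=
          mul_le_mul_of_nonneg_right (by linarith [norm_nonneg T])
            (Real.rpow_nonneg hlpos.le _)

end StmtAux
namespace StmtAux

lemma sigmaL_le_of_decomp (X R S : H →L[ℂ] H) (hR : IsCompactOperator R)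
    (hS : IsCompactOperator S) (hsum : R + S = X) (l : ℝ) :
    sigmaL X l ≤ traceNorm R + ENNReal.ofReal (l * ‖S‖) :=
  iInf_le_of_le R (iInf_le_of_le S (iInf_le_of_le hR (iInf_le_of_le hS
    (iInf_le_of_le hsum le_rfl))))

lemma traceNorm_zero : traceNorm (0 : H →L[ℂ] H) = 0 := by
  have h : ∀ n : ℕ, singVal (0 : H →L[ℂ] H) n = 0 := by
    intro n
    have h1 : LinearMap.range ((0 : H →L[ℂ] H) : H →ₗ[ℂ] H) = ⊥ := by
      rw [ContinuousLinearMap.coe_zero, LinearMap.range_zero]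
    refine singVal_eq_zero_of_finrank_le _ ?_ ?_ <;> rw [h1]
    · infer_instance
    · simp
  rw [traceNorm]
  simp [h]

lemma sigmaL_zero_le (l : ℝ) : sigmaL (0 : H →L[ℂ] H) l = 0 := by
  refine le_antisymm ?_ zero_le
  have h := sigmaL_le_of_decomp (0 : H →L[ℂ] H) 0 0 isCompactOperator_zero
    isCompactOperator_zero (by simp) l
  simpa [traceNorm_zero] using h

end StmtAux

set_option maxHeartbeats 2000000 in
open StmtAux in
/-- If `T` is a positive compact operator lying in `L^{p+}`
for some `p > 1`, i.e. `sup_{λ>e} σ_λ(T)/λ^{(p-1)/p} < ∞`, then `T^p`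
(defined by the continuous functional calculus) belongs to the Dixmier ideal
`L^{1+}`, i.e. `sup_{λ>e} σ_λ(T^p)/ln λ < ∞`. -/
theorem stmt_14 (T : H →L[ℂ] H) (hT : IsCompactOperator T)
    (hpos : T.IsPositive) (p : ℝ) (hp : 1 < p)
    (hbound : ∃ C : ℝ≥0∞, C ≠ ⊤ ∧ ∀ l : ℝ, Real.exp 1 < l →
      sigmaL T l ≤ C * ENNReal.ofReal (l ^ ((p - 1) / p))) :
    ∃ C : ℝ≥0∞, C ≠ ⊤ ∧ ∀ l : ℝ, Real.exp 1 < l →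
      sigmaL (cfc (fun x : ℝ => x ^ p) T) l ≤ C * ENNReal.ofReal (Real.log l) := by
  classical
  obtain ⟨C, hC, hCb⟩ := hbound
  have hp0 : (0:ℝ) < p := lt_trans one_pos hp
  rcases subsingleton_or_nontrivial H with hH | hH
  · refine ⟨1, ENNReal.one_ne_top, fun l hl => ?_⟩
    have h0 := sigmaL_le_of_decomp (cfc (fun x : ℝ => x ^ p) T) 0 0
      isCompactOperator_zero isCompactOperator_zero (Subsingleton.elim _ _) l
    simp only [traceNorm_zero, norm_zero, mul_zero, ENNReal.ofReal_zero, add_zero] at h0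
    exact h0.trans zero_le
  have hsa : IsSelfAdjoint T := hpos.isSelfAdjoint
  by_cases hb0 : ‖T‖ = 0
  · have hT0 : T = 0 := norm_eq_zero.mp hb0
    subst hT0
    have hX : cfc (fun x : ℝ => x ^ p) (0 : H →L[ℂ] H) = 0 := by
      have h1 : cfc (fun x : ℝ => x ^ p) (0 : H →L[ℂ] H) =
          cfc (fun _ : ℝ => (0:ℝ)) (0 : H →L[ℂ] H) := by
        apply cfc_congr
        intro x hx
        rw [spectrum.zero_eq] at hx
        simp only [Set.mem_singleton_iff] at hx
        rw [hx]
        exact Real.zero_rpow (ne_of_gt hp0)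
      rw [h1, cfc_const_zero]
    refine ⟨1, ENNReal.one_ne_top, fun l hl => ?_⟩
    rw [hX, sigmaL_zero_le]
    exact zero_le
  -- main case
  have hspec0 : ∀ x ∈ spectrum ℝ T, 0 ≤ x :=
    SpectrumRestricts.nnreal_iff.mp hpos.spectrumRestricts
  have hspecle : ∀ x ∈ spectrum ℝ T, x ≤ ‖T‖ := fun x hx =>
    (le_abs_self x).trans (by simpa [Real.norm_eq_abs] using spectrum.norm_le_norm_of_mem hx)
  set b : ℝ := ‖T‖ with hbdef
  have hb : 0 < b := lt_of_le_of_ne (norm_nonneg T) (Ne.symm hb0)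
  set c₂ : ℝ := 2 * C.toReal + 2 + 2 * b with hc₂def
  have hCt : (0:ℝ) ≤ C.toReal := ENNReal.toReal_nonneg
  have hc₂ : 0 < c₂ := by rw [hc₂def]; linarith
  have hA' : ∀ m : ℕ, singVal T m ≤ c₂ * ((m:ℝ)+1) ^ (-(1/p)) := stepA T hC hp hCb
  set K : ℝ := (2*c₂)^p + b^p with hKdef
  have h2c₂pos : (0:ℝ) < (2*c₂)^p := Real.rpow_pos_of_pos (by linarith) _
  have hbppos : (0:ℝ) < b^p := Real.rpow_pos_of_pos hb _
  have hK0 : 0 < K := by rw [hKdef]; linarith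
  refine ⟨ENNReal.ofReal (4*K + b^p), ENNReal.ofReal_ne_top, fun l hl => ?_⟩
  have hexp1 : (1:ℝ) < Real.exp 1 := by
    have := Real.exp_one_gt_d9; linarith
  have hl1 : (1:ℝ) < l := lt_trans hexp1 hl
  have hlpos : (0:ℝ) < l := lt_trans one_pos hl1
  have hlog : 1 ≤ Real.log l := by
    have h := Real.log_lt_log (Real.exp_pos 1) hl
    rw [Real.log_exp] at h
    linarith
  set J : ℕ := ⌈Real.logb 2 l⌉₊ with hJdef
  have h2J : l ≤ 2 ^ J := by
    have h1 : Real.logb 2 l ≤ (J:ℝ) := Nat.le_ceil _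
    calc l = 2 ^ Real.logb 2 l :=
          (Real.rpow_logb (by norm_num) (by norm_num) hlpos).symm
      _ ≤ 2 ^ (J:ℝ) := Real.rpow_le_rpow_of_exponent_le (by norm_num) h1
      _ = 2 ^ J := by rw [Real.rpow_natCast]
  have hJbound : (J:ℝ) + 1 ≤ 4 * Real.log l := by
    have hlogb0 : 0 ≤ Real.logb 2 l := Real.logb_nonneg (by norm_num) hl1.le
    have h1 : (J:ℝ) < Real.logb 2 l + 1 := Nat.ceil_lt_add_one hlogb0
    have h2 : Real.logb 2 l ≤ 2 * Real.log l := by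
      rw [Real.logb, div_le_iff₀ (Real.log_pos (by norm_num))]
      nlinarith [Real.log_two_gt_d9, Real.log_nonneg hl1.le]
    linarith
  set t : ℕ → ℝ := fun k => b / 2 ^ k with htdef
  have htpos : ∀ k, 0 < t k := fun k => div_pos hb (by positivity)
  have htle : ∀ k, t k ≤ b := fun k => by
    rw [htdef]
    exact div_le_self hb.le (one_le_pow₀ (by norm_num))
  have htanti : ∀ j k, j ≤ k → t k ≤ t j := by
    intro j k hjk
    rw [htdef]
    exact div_le_div_of_nonneg_left hb.le (by positivity)
      (pow_le_pow_right₀ (by norm_num) hjk)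
  set n : ℕ → ℕ := fun k => ⌈(c₂ / t k) ^ p⌉₊ with hndef
  have hnmono : ∀ j k, j ≤ k → n j ≤ n k := by
    intro j k hjk
    apply Nat.ceil_le_ceil
    exact Real.rpow_le_rpow (by positivity)
      (div_le_div_of_nonneg_left hc₂.le (htpos k) (htanti j k hjk)) hp0.le
  have hsing : ∀ k, singVal T (n k) < t k := by
    intro k
    have hd0 : (0:ℝ) ≤ c₂ / t k := div_nonneg hc₂.le (htpos k).le
    have h1 : (c₂ / t k) ^ p < (n k : ℝ) + 1 :=
      lt_of_le_of_lt (Nat.le_ceil _) (lt_add_one _)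
    have h2 : c₂ / t k < ((n k : ℝ) + 1) ^ (1/p) := by
      have h3 := Real.rpow_lt_rpow (Real.rpow_nonneg hd0 p) h1
        (by positivity : (0:ℝ) < 1/p)
      rwa [← Real.rpow_mul hd0, mul_one_div_cancel (ne_of_gt hp0), Real.rpow_one] at h3
    have hy : (0:ℝ) < ((n k:ℝ)+1) ^ (1/p) := Real.rpow_pos_of_pos (by positivity) _
    have h4 : c₂ * ((n k:ℝ)+1) ^ (-(1/p)) < t k := by
      rw [Real.rpow_neg (by positivity), ← div_eq_mul_inv, div_lt_iff₀ hy]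
      have h5 := (div_lt_iff₀ (htpos k)).mp h2
      nlinarith [htpos k]
    exact lt_of_le_of_lt (hA' (n k)) h4
  -- continuity
  have hcont1 : Continuous (fun x : ℝ => x ^ p) := cont_rpow hp0.le
  have hcontmin : ∀ c : ℝ, Continuous (fun x : ℝ => (min x c) ^ p) := fun c =>
    (cont_rpow hp0.le).comp (continuous_id.min continuous_const)
  have hcontA : ∀ c : ℝ, Continuous (fun x : ℝ => x ^ p - (min x c) ^ p) := fun c =>
    hcont1.sub (hcontmin c)
  -- the operators
  set A : ℕ → (H →L[ℂ] H) := fun k => cfc (fun x : ℝ => x ^ p - (min x (t k)) ^ p) T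
    with hAdef
  set R : H →L[ℂ] H := A J with hRdef
  set S : H →L[ℂ] H := cfc (fun x : ℝ => (min x (t J)) ^ p) T with hSdef
  set Bop : ℕ → (H →L[ℂ] H) :=
    fun k => cfc (fun x : ℝ => (min x (t k)) ^ p - (min x (t J)) ^ p) T with hBdef
  have hrankA : ∀ k, FiniteDimensional ℂ (LinearMap.range ((A k : H →L[ℂ] H) : H →ₗ[ℂ] H)) ∧
      Module.finrank ℂ (LinearMap.range ((A k : H →L[ℂ] H) : H →ₗ[ℂ] H)) ≤ n k := by
    intro k
    refine finrank_cfc_le T hsa ((hcontA (t k)).continuousOn) (htpos k) ?_ (hsing k)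
    intro x _ hxt
    simp [min_eq_left hxt.le]
  have hsvA : ∀ k, singVal (A k) (n k) = 0 := fun k =>
    singVal_eq_zero_of_finrank_le _ (hrankA k).1 (hrankA k).2
  have hsplit : ∀ k, R = A k + Bop k := by
    intro k
    rw [hRdef, hAdef, hBdef]
    have hfun : (fun x : ℝ => x ^ p - (min x (t J)) ^ p) = fun x : ℝ =>
        (x ^ p - (min x (t k)) ^ p) + ((min x (t k)) ^ p - (min x (t J)) ^ p) := by
      funext x; ring
    simp only
    rw [hfun]
    exact cfc_add (a := T) _ _ ((hcontA (t k)).continuousOn)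
      (((hcontmin (t k)).sub (hcontmin (t J))).continuousOn)
  have hnormB : ∀ k, k ≤ J → ‖Bop k‖ ≤ (t k) ^ p := by
    intro k hk
    apply norm_cfc_le (Real.rpow_nonneg (htpos k).le p)
    intro x hx
    have hx0 : 0 ≤ x := hspec0 x hx
    have h1 : 0 ≤ min x (t J) := le_min hx0 (htpos J).le
    have h2 : min x (t J) ≤ min x (t k) := min_le_min le_rfl (htanti k J hk)
    have h3 : min x (t k) ≤ t k := min_le_right _ _
    have e1 : (min x (t J)) ^ p ≤ (min x (t k)) ^ p := Real.rpow_le_rpow h1 h2 hp0.le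
    have e2 : (min x (t k)) ^ p ≤ (t k) ^ p :=
      Real.rpow_le_rpow (h1.trans h2) h3 hp0.le
    have e3 : 0 ≤ (min x (t J)) ^ p := Real.rpow_nonneg h1 p
    rw [Real.norm_eq_abs, abs_of_nonneg (by linarith)]
    linarith
  have hnormR : ‖R‖ ≤ b ^ p := by
    rw [hRdef, hAdef]
    apply norm_cfc_le (Real.rpow_nonneg hb.le p)
    intro x hx
    have hx0 : 0 ≤ x := hspec0 x hx
    have h1 : 0 ≤ min x (t J) := le_min hx0 (htpos J).le
    have e1 : (min x (t J)) ^ p ≤ x ^ p :=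
      Real.rpow_le_rpow h1 (min_le_left _ _) hp0.le
    have e2 : x ^ p ≤ b ^ p := Real.rpow_le_rpow hx0 (hspecle x hx) hp0.le
    have e3 : 0 ≤ (min x (t J)) ^ p := Real.rpow_nonneg h1 p
    rw [Real.norm_eq_abs, abs_of_nonneg (by linarith)]
    linarith
  have hsvR_le : ∀ m : ℕ, singVal R m ≤ b ^ p := fun m =>
    ((singVal_antitone R (Nat.zero_le m)).trans (singVal_le_norm R 0)).trans hnormR
  have hsvRk : ∀ k, k ≤ J → ∀ m, n k ≤ m → singVal R m ≤ (t k) ^ p := by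
    intro k hk m hm
    have h1 : singVal R m ≤ singVal (A k) m + singVal (Bop k) 0 := by
      have h := singVal_add_le (A k) (Bop k) m 0
      rw [← hsplit k] at h
      simpa using h
    have h2 : singVal (A k) m ≤ 0 := (singVal_antitone _ hm).trans (hsvA k).le
    have h3 : singVal (Bop k) 0 ≤ ‖Bop k‖ := singVal_le_norm _ 0
    linarith [hnormB k hk]
  have hRzero : ∀ m, n J ≤ m → singVal R m = 0 := by
    intro m hm
    have h1 : singVal R m ≤ 0 := by
      have := singVal_antitone R hm
      rw [hRdef] at this ⊢
      exact this.trans (hsvA J).le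
    exact le_antisymm h1 (singVal_nonneg _ _)
  have htr : traceNorm R = ∑ m ∈ Finset.range (n J), ENNReal.ofReal (singVal R m) := by
    rw [traceNorm]
    apply tsum_eq_sum
    intro m hm
    rw [hRzero m (not_lt.mp (fun hc => hm (Finset.mem_range.mpr hc)))]
    simp
  -- block sums
  have hblock : ∀ k, k ≤ J →
      (∑ m ∈ Finset.range (n k), singVal R m) ≤ ((k:ℝ) + 1) * K := by
    intro k
    induction k with
    | zero =>
      intro _
      have h1 : (∑ m ∈ Finset.range (n 0), singVal R m) ≤ (n 0) • (b ^ p) :=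
        Finset.sum_le_card_nsmul _ _ _ (fun m _ => hsvR_le m) |>.trans
          (by rw [Finset.card_range])
      rw [nsmul_eq_mul] at h1
      have ht0 : t 0 = b := by rw [htdef]; simp
      have h2 : ((n 0 : ℝ)) < (c₂ / b) ^ p + 1 := by
        simp only [hndef]
        rw [← ht0]
        exact Nat.ceil_lt_add_one (by positivity)
      have h3 : (c₂ / b) ^ p * b ^ p = c₂ ^ p := by
        rw [← Real.mul_rpow (by positivity) hb.le, div_mul_cancel₀ _ (ne_of_gt hb)]
      have h4 : c₂ ^ p ≤ (2*c₂) ^ p := Real.rpow_le_rpow hc₂.le (by linarith) hp0.le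
      calc (∑ m ∈ Finset.range (n 0), singVal R m) ≤ (n 0 : ℝ) * b ^ p := h1
        _ ≤ ((c₂ / b) ^ p + 1) * b ^ p := mul_le_mul_of_nonneg_right h2.le hbppos.le
        _ = c₂ ^ p + b ^ p := by rw [add_mul, h3, one_mul]
        _ ≤ K := by rw [hKdef]; linarith
        _ = (((0:ℕ):ℝ) + 1) * K := by norm_num
    | succ k ih =>
      intro hk1
      have hk : k ≤ J := le_trans (Nat.le_succ k) hk1
      have hprev := ih hk
      have hsplit_sum : (∑ m ∈ Finset.range (n (k+1)), singVal R m) =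
          (∑ m ∈ Finset.range (n k), singVal R m) +
          (∑ m ∈ Finset.Ico (n k) (n (k+1)), singVal R m) := by
        rw [Finset.range_eq_Ico, Finset.range_eq_Ico]
        exact (Finset.sum_Ico_consecutive _ (Nat.zero_le _)
          (hnmono k (k+1) (Nat.le_succ k))).symm
      have hIco : (∑ m ∈ Finset.Ico (n k) (n (k+1)), singVal R m) ≤
          (n (k+1) : ℝ) * (t k) ^ p := by
        have h1 : (∑ m ∈ Finset.Ico (n k) (n (k+1)), singVal R m) ≤
            (Finset.Ico (n k) (n (k+1))).card • ((t k) ^ p) :=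
          Finset.sum_le_card_nsmul _ _ _
            (fun m hm => hsvRk k hk m (Finset.mem_Ico.mp hm).1)
        rw [nsmul_eq_mul, Nat.card_Ico] at h1
        refine h1.trans ?_
        have : ((n (k+1) - n k : ℕ) : ℝ) ≤ (n (k+1) : ℝ) := by
          exact_mod_cast Nat.sub_le _ _
        exact mul_le_mul_of_nonneg_right this (Real.rpow_nonneg (htpos k).le p)
      have hnk1 : ((n (k+1) : ℝ)) < (c₂ / t (k+1)) ^ p + 1 := by
        simp only [hndef]
        exact Nat.ceil_lt_add_one (by positivity)
      have hratio : c₂ / t (k+1) * t k = 2 * c₂ := by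
        have e1 : t k = b / 2^k := rfl
        have e2 : t (k+1) = b / 2^(k+1) := rfl
        have hbne : b ≠ 0 := ne_of_gt hb
        have h2k : ((2:ℝ)^k) ≠ 0 := by positivity
        have h2k1 : ((2:ℝ)^(k+1)) ≠ 0 := by positivity
        rw [e1, e2]
        field_simp
        rw [pow_succ]
      have hcomb : (c₂ / t (k+1)) ^ p * (t k) ^ p = (2*c₂) ^ p := by
        rw [← Real.mul_rpow (by positivity) (htpos k).le, hratio]
      have htkb : (t k) ^ p ≤ b ^ p :=
        Real.rpow_le_rpow (htpos k).le (htle k) hp0.le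
      have hbound2 : (n (k+1) : ℝ) * (t k) ^ p ≤ K := by
        have h5 : (0:ℝ) ≤ (t k)^p := Real.rpow_nonneg (htpos k).le p
        calc (n (k+1) : ℝ) * (t k) ^ p ≤ ((c₂ / t (k+1)) ^ p + 1) * (t k) ^ p := by
              nlinarith
          _ = (2*c₂) ^ p + (t k) ^ p := by rw [add_mul, hcomb, one_mul]
          _ ≤ K := by rw [hKdef]; linarith
      rw [hsplit_sum]
      push_cast
      calc (∑ m ∈ Finset.range (n k), singVal R m) +
          (∑ m ∈ Finset.Ico (n k) (n (k+1)), singVal R m)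
          ≤ ((k:ℝ) + 1) * K + (n (k+1) : ℝ) * (t k) ^ p := add_le_add hprev hIco
        _ ≤ ((k:ℝ) + 1) * K + K := by linarith [hbound2]
        _ = ((k:ℝ) + 1 + 1) * K := by ring
  have htrbound : traceNorm R ≤ ENNReal.ofReal (((J:ℝ) + 1) * K) := by
    rw [htr, ← ENNReal.ofReal_sum_of_nonneg (fun m _ => singVal_nonneg R m)]
    exact ENNReal.ofReal_le_ofReal (hblock J le_rfl)
  -- norm of S
  have hnormS : ‖S‖ ≤ (t J) ^ p := by
    rw [hSdef]
    apply norm_cfc_le (Real.rpow_nonneg (htpos J).le p)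
    intro x hx
    have hx0 : 0 ≤ x := hspec0 x hx
    have h1 : 0 ≤ min x (t J) := le_min hx0 (htpos J).le
    have e2 : (min x (t J)) ^ p ≤ (t J) ^ p :=
      Real.rpow_le_rpow h1 (min_le_right _ _) hp0.le
    rw [Real.norm_eq_abs, abs_of_nonneg (Real.rpow_nonneg h1 p)]
    exact e2
  have hlS : l * ‖S‖ ≤ b ^ p := by
    have h2Jp : l ≤ ((2:ℝ) ^ J) ^ p := by
      refine h2J.trans ?_
      calc ((2:ℝ) ^ J) = ((2:ℝ) ^ J) ^ (1:ℝ) := (Real.rpow_one _).symm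
        _ ≤ ((2:ℝ) ^ J) ^ p :=
            Real.rpow_le_rpow_of_exponent_le (one_le_pow₀ (by norm_num)) hp.le
    have htJ : (t J) ^ p = b ^ p / ((2:ℝ) ^ J) ^ p := by
      have e : t J = b / 2 ^ J := rfl
      rw [e]
      exact Real.div_rpow hb.le (by positivity) p
    have h1 : (t J) ^ p ≤ b ^ p / l := by
      rw [htJ]
      exact div_le_div_of_nonneg_left (Real.rpow_nonneg hb.le p) hlpos h2Jp
    calc l * ‖S‖ ≤ l * ((t J) ^ p) :=
          mul_le_mul_of_nonneg_left hnormS hlpos.le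
      _ ≤ l * (b ^ p / l) := mul_le_mul_of_nonneg_left h1 hlpos.le
      _ = b ^ p := by field_simp
  -- compactness
  have hRc : IsCompactOperator R := by
    rw [hRdef]
    exact isCompactOperator_of_finiteDimensional _ (hrankA J).1
  set h' : ℝ → ℝ := fun x => min (|x| ^ (p-1)) ((t J) ^ p / max x (t J)) with hh'def
  have hch' : Continuous h' := by
    apply Continuous.min
    · exact (cont_rpow (by linarith)).comp continuous_abs
    · exact continuous_const.div (continuous_id.max continuous_const)
        (fun x => ne_of_gt (lt_of_lt_of_le (htpos J) (le_max_right x (t J))))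
  have hSeq : S = T * cfc h' T := by
    have h1 : S = cfc (fun x : ℝ => x * h' x) T := by
      rw [hSdef]
      apply cfc_congr
      intro x hx
      have hx0 : 0 ≤ x := hspec0 x hx
      have htJ0 : 0 < t J := htpos J
      show (min x (t J)) ^ p = x * h' x
      rcases le_or_gt x (t J) with hxs | hxs
      · rw [min_eq_left hxs, hh'def]
        simp only
        rw [abs_of_nonneg hx0, max_eq_right hxs]
        have e1 : (t J) ^ p / (t J) = (t J) ^ (p - 1) := by
          rw [Real.rpow_sub_one (ne_of_gt htJ0)]
        rw [e1, min_eq_left (Real.rpow_le_rpow hx0 hxs (by linarith))]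
        rcases eq_or_lt_of_le hx0 with hx0' | hx0'
        · rw [← hx0', Real.zero_rpow (ne_of_gt hp0), zero_mul]
        · have e3 : x * x ^ (p-1) = x ^ (1 + (p-1)) := by
            rw [Real.rpow_add hx0', Real.rpow_one]
          have e4 : (1:ℝ) + (p - 1) = p := by ring
          rw [e3, e4]
      · rw [min_eq_right hxs.le, hh'def]
        simp only
        have hxpos : 0 < x := lt_trans htJ0 hxs
        rw [abs_of_nonneg hx0, max_eq_left hxs.le]
        have e1 : (t J) ^ p / x ≤ x ^ (p-1) := by
          rw [div_le_iff₀ hxpos]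
          calc (t J) ^ p ≤ x ^ p := Real.rpow_le_rpow htJ0.le hxs.le hp0.le
            _ = x ^ (p - 1) * x := by
              rw [← Real.rpow_add_one (ne_of_gt hxpos)]
              ring_nf
        rw [min_eq_right e1, mul_comm, div_mul_cancel₀ _ (ne_of_gt hxpos)]
    have hidc : ContinuousOn (fun x : ℝ => x) (spectrum ℝ T) := continuousOn_id
    rw [h1, cfc_mul _ _ T hidc hch'.continuousOn, cfc_id' ℝ T hsa]
  have hSc : IsCompactOperator S := by
    rw [hSeq, ContinuousLinearMap.mul_def, ContinuousLinearMap.coe_comp']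
    exact hT.comp_clm _
  have hsum : R + S = cfc (fun x : ℝ => x ^ p) T := by
    rw [hRdef, hAdef, hSdef]
    simp only
    rw [← cfc_add (a := T) _ _ ((hcontA (t J)).continuousOn) ((hcontmin (t J)).continuousOn)]
    apply cfc_congr
    intro x _
    ring
  -- final
  calc sigmaL (cfc (fun x : ℝ => x ^ p) T) l
      ≤ traceNorm R + ENNReal.ofReal (l * ‖S‖) :=
        sigmaL_le_of_decomp _ R S hRc hSc hsum l
    _ ≤ ENNReal.ofReal (((J:ℝ) + 1) * K) + ENNReal.ofReal (b ^ p) :=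
        add_le_add htrbound (ENNReal.ofReal_le_ofReal hlS)
    _ = ENNReal.ofReal (((J:ℝ) + 1) * K + b ^ p) :=
        (ENNReal.ofReal_add (by positivity) hbppos.le).symm
    _ ≤ ENNReal.ofReal ((4*K + b^p) * Real.log l) := by
        apply ENNReal.ofReal_le_ofReal
        nlinarith [hJbound, hK0, hlog, hbppos]
    _ = ENNReal.ofReal (4*K + b^p) * ENNReal.ofReal (Real.log l) :=
        ENNReal.ofReal_mul (by positivity)
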